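/- Let w₁ and w₂ be two distinct elements of Thompson's group F. Then there exists at most one pair (i, j) of positive integers such that x₀ⁱ x₁ x₀⁻ⁱ w₁ = x₀ʲ x₁ x₀⁻ʲ w₂; that is, if positive integers (i, j) and (k, l) both satisfy x₀ⁱ x₁ x₀⁻ⁱ w₁ = x₀ʲ x₁ x₀⁻ʲ w₂ and x₀ᵏ x₁ x₀⁻ᵏ w₁ = x₀ˡ x₁ x₀⁻ˡ w₂, then i = k and j = l. -/

import Mathlib

open scoped BigOperators

open scoped commutatorElement in
/-- The two relators of the finite presentation of Thompson's group `F`: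
`[x₀x₁⁻¹, x₀⁻¹x₁x₀]` and `[x₀x₁⁻¹, x₀⁻²x₁x₀²]`. -/
def thompsonRels : Set (FreeGroup (Fin 2)) :=
  { ⁅FreeGroup.of (0 : Fin 2) * (FreeGroup.of (1 : Fin 2))⁻¹,
      (FreeGroup.of (0 : Fin 2))⁻¹ * FreeGroup.of (1 : Fin 2) * FreeGroup.of (0 : Fin 2)⁆,
    ⁅FreeGroup.of (0 : Fin 2) * (FreeGroup.of (1 : Fin 2))⁻¹,
      (FreeGroup.of (0 : Fin 2))⁻¹ ^ 2 * FreeGroup.of (1 : Fin 2) * FreeGroup.of (0 : Fin 2) ^ 2⁆ }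

/-- Thompson's group `F`, as a presented group. -/
abbrev ThompsonF : Type := PresentedGroup thompsonRels

/-- The generator `x₀`. -/
def x₀ : ThompsonF := PresentedGroup.of 0

/-- The generator `x₁`. -/
def x₁ : ThompsonF := PresentedGroup.of 1

/-- The canonical projection from the free group on `x₀, x₁` to Thompson's group. -/
def toF : List (Fin 2 × Bool) → ThompsonF := fun l =>
  PresentedGroup.mk thompsonRels (FreeGroup.mk l)

/-- The word representing `x_g^z` (`g = 0` or `1`), as a list of letters. -/
def powWord (g : Fin 2) (z : ℤ) : List (Fin 2 × Bool) :=
  List.replicate z.natAbs (g, decide (0 < z))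

/-- A word is reduced if it equals the reduced word of the free-group element
it represents. -/
def Reduced (l : List (Fin 2 × Bool)) : Prop :=
  (FreeGroup.mk l).toWord = l

/-- The forbidden subwords of Guba–Sapir: `x₁^{±1} x₀^i x₁` (`i > 0`) and
`x₁^{±1} x₀^{i+1} x₁⁻¹` (`i > 0`). -/
def ForbiddenWord (w : List (Fin 2 × Bool)) : Prop :=
  ∃ (s : Bool) (i : ℕ), 0 < i ∧
    (w = (1, s) :: (List.replicate i ((0 : Fin 2), true) ++ [((1 : Fin 2), true)]) ∨
     w = (1, s) :: (List.replicate (i + 1) ((0 : Fin 2), true) ++ [((1 : Fin 2), false)]))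

/-- A word is a (Guba–Sapir) normal form if it is reduced and contains no
forbidden subword. -/
def IsNormalForm (l : List (Fin 2 × Bool)) : Prop :=
  Reduced l ∧ ∀ w, w <:+: l → ¬ ForbiddenWord w

/-- `w` is the element of `F` whose normal form begins with the prefix `pre`. -/
def NFBeginsWith (w : ThompsonF) (pre : List (Fin 2 × Bool)) : Prop :=
  ∃ l, IsNormalForm l ∧ toF l = w ∧ pre <+: l

/-- `F₁ = {x₀^k : k ≥ 0}`. -/
def SetF₁ : Set ThompsonF := {w | ∃ k : ℕ, w = x₀ ^ k}

/-- `F₂`: normal form begins with `x₀^k x₁^l`, `k > 0`, `l ≠ 0`. -/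
def SetF₂ : Set ThompsonF :=
  {w | ∃ (k l : ℤ), 0 < k ∧ l ≠ 0 ∧ NFBeginsWith w (powWord 0 k ++ powWord 1 l)}

/-- `F₃`: normal form begins with `x₀^{-k} x₁^l`, `k > 0`, `l ∈ ℤ`. -/
def SetF₃ : Set ThompsonF :=
  {w | ∃ (k l : ℤ), 0 < k ∧ NFBeginsWith w (powWord 0 (-k) ++ powWord 1 l)}

/-- `F₄`: normal form begins with `x₁^k`, `k > 0`. -/
def SetF₄ : Set ThompsonF :=
  {w | ∃ k : ℤ, 0 < k ∧ NFBeginsWith w (powWord 1 k)}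

/-- `F₅`: normal form begins with `x₁^{-k}`, `k > 0`. -/
def SetF₅ : Set ThompsonF :=
  {w | ∃ k : ℤ, 0 < k ∧ NFBeginsWith w (powWord 1 (-k))}

namespace Statement7Aux

noncomputable section


/-- The PL map `x₁` of the real-line model of Thompson's group. -/
def bFun (t : ℝ) : ℝ := if t ≤ 0 then t else if t ≤ 2 then t / 2 else t - 1

/-- The inverse of `bFun`. -/
def biFun (t : ℝ) : ℝ := if t ≤ 0 then t else if t ≤ 1 then 2 * t else t + 1

lemma bi_b (t : ℝ) : biFun (bFun t) = t := by
  unfold bFun biFun; split_ifs <;> linarith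

lemma b_bi (t : ℝ) : bFun (biFun t) = t := by
  unfold bFun biFun; split_ifs <;> linarith

/-- Translation `t ↦ t - 1`, the image of `x₀`. -/
def X0 : Equiv.Perm ℝ :=
  ⟨fun t => t - 1, fun t => t + 1, fun t => by ring, fun t => by ring⟩

/-- The image of `x₁`. -/
def X1 : Equiv.Perm ℝ := ⟨bFun, biFun, bi_b, b_bi⟩

@[simp] lemma X0_apply (t : ℝ) : X0 t = t - 1 := rfl
@[simp] lemma X0_inv_apply (t : ℝ) : X0⁻¹ t = t + 1 := rfl
@[simp] lemma X1_apply (t : ℝ) : X1 t = bFun t := rfl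
@[simp] lemma X1_inv_apply (t : ℝ) : X1⁻¹ t = biFun t := rfl

set_option maxHeartbeats 2000000 in
lemma comm1 : (X0 * X1⁻¹) * (X0⁻¹ * X1 * X0) = (X0⁻¹ * X1 * X0) * (X0 * X1⁻¹) := by
  ext t
  simp only [Equiv.Perm.mul_apply, X0_apply, X0_inv_apply, X1_apply, X1_inv_apply]
  unfold bFun biFun
  split_ifs <;> linarith

set_option maxHeartbeats 4000000 in
lemma comm2 : (X0 * X1⁻¹) * (X0⁻¹ ^ 2 * X1 * X0 ^ 2) = (X0⁻¹ ^ 2 * X1 * X0 ^ 2) * (X0 * X1⁻¹) := by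
  have h2 : ∀ σ : Equiv.Perm ℝ, σ ^ 2 = σ * σ := fun σ => sq σ
  rw [h2, h2]
  ext t
  simp only [Equiv.Perm.mul_apply, X0_apply, X0_inv_apply, X1_apply, X1_inv_apply]
  unfold bFun biFun
  split_ifs <;> linarith




/-- The conjugated map `x₀^b x₁⁻¹ x₀^{a-b} x₁ x₀^{-a}` in the real model. -/
def G (a b p : ℝ) : ℝ := biFun (bFun (p + a) - a + b) - b

lemma GA {a b : ℝ} (ha : 1 ≤ a) (hb : 1 ≤ b) (hab : a + 1 ≤ b) {p : ℝ} (hp : p ≤ -b) :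
    G a b p = p := by
  unfold G bFun biFun; split_ifs <;> linarith

lemma GB {a b : ℝ} (ha : 1 ≤ a) (hb : 1 ≤ b) (hab : a + 1 ≤ b) {p : ℝ} (hp : 2 - a ≤ p) :
    G a b p = p := by
  unfold G bFun biFun; split_ifs <;> linarith

lemma GC {a b : ℝ} (ha : 1 ≤ a) (hb : 1 ≤ b) (hab : a + 1 ≤ b) {p : ℝ}
    (h1 : -b < p) (h2 : p < 2 - a) : p < G a b p := by
  unfold G bFun biFun; split_ifs <;> linarith

lemma GA' {a b : ℝ} (ha : 1 ≤ a) (hb : 1 ≤ b) (hab : b + 1 ≤ a) {p : ℝ} (hp : p ≤ -a) :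
    G a b p = p := by
  unfold G bFun biFun; split_ifs <;> linarith

lemma GB' {a b : ℝ} (ha : 1 ≤ a) (hb : 1 ≤ b) (hab : b + 1 ≤ a) {p : ℝ} (hp : 2 - b ≤ p) :
    G a b p = p := by
  unfold G bFun biFun; split_ifs <;> linarith

lemma GC' {a b : ℝ} (ha : 1 ≤ a) (hb : 1 ≤ b) (hab : b + 1 ≤ a) {p : ℝ}
    (h1 : -a < p) (h2 : p < 2 - b) : G a b p < p := by
  unfold G bFun biFun; split_ifs <;> linarith



/-- The map sending the generators of Thompson's group to `X0`, `X1`. -/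
def fgen : Fin 2 → Equiv.Perm ℝ := ![X0, X1]

lemma hrels : ∀ r ∈ thompsonRels, FreeGroup.lift fgen r = 1 := by
  intro r hr
  unfold thompsonRels at hr
  simp only [Set.mem_insert_iff, Set.mem_singleton_iff] at hr
  rcases hr with rfl | rfl <;>
    rw [map_commutatorElement, commutatorElement_eq_one_iff_mul_comm] <;>
      simp only [map_mul, map_inv, map_pow, FreeGroup.lift_apply_of, fgen,
        Matrix.cons_val_zero, Matrix.cons_val_one, Matrix.head_cons]
  · exact comm1
  · exact comm2

/-- The representation of Thompson's group on the real line. -/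
def phi : ThompsonF →* Equiv.Perm ℝ := PresentedGroup.toGroup hrels

lemma phi_x0 : phi x₀ = X0 := by
  show PresentedGroup.toGroup hrels (PresentedGroup.of 0) = X0
  rw [PresentedGroup.toGroup.of]
  rfl

lemma phi_x1 : phi x₁ = X1 := by
  show PresentedGroup.toGroup hrels (PresentedGroup.of 1) = X1
  rw [PresentedGroup.toGroup.of]
  rfl

lemma X0_zpow (n : ℤ) : ∀ t : ℝ, (X0 ^ n) t = t - n := by
  induction n using Int.induction_on with
  | zero => intro t; simp
  | succ m ih =>
      intro t
      rw [zpow_add_one, Equiv.Perm.mul_apply, ih, X0_apply]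
      push_cast; ring
  | pred m ih =>
      intro t
      rw [zpow_sub_one, Equiv.Perm.mul_apply, ih, X0_inv_apply]
      push_cast; ring


lemma mainReal {a b c d : ℝ} (ha : 1 ≤ a) (hb : 1 ≤ b) (hc : 1 ≤ c) (hd : 1 ≤ d)
    (hab : a + 1 ≤ b ∨ b + 1 ≤ a) (hcd : c + 1 ≤ d ∨ d + 1 ≤ c)
    (hG : ∀ p, G a b p = G c d p) : a = c ∧ b = d := by
  rcases hab with hab | hab <;> rcases hcd with hcd | hcd
  · -- both increasing
    have hbd : b = d := by
      rcases lt_trichotomy b d with h | h | h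
      · exfalso
        set p := min (-b) ((-d + (2 - c)) / 2) with hp
        have h1 : -d < p := by apply lt_min <;> linarith
        have h2 : p < 2 - c := by
          have := min_le_right (-b) ((-d + (2 - c)) / 2); linarith
        have h3 : p ≤ -b := min_le_left _ _
        have hC := GC hc hd hcd h1 h2
        rw [← hG p, GA ha hb hab h3] at hC
        exact lt_irrefl _ hC
      · exact h
      · exfalso
        set p := min (-d) ((-b + (2 - a)) / 2) with hp
        have h1 : -b < p := by apply lt_min <;> linarith
        have h2 : p < 2 - a := by
          have := min_le_right (-d) ((-b + (2 - a)) / 2); linarith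
        have h3 : p ≤ -d := min_le_left _ _
        have hC := GC ha hb hab h1 h2
        rw [hG p, GA hc hd hcd h3] at hC
        exact lt_irrefl _ hC
    refine ⟨?_, hbd⟩
    rcases lt_trichotomy a c with h | h | h
    · exfalso
      set p := max (2 - c) ((-b + (2 - a)) / 2) with hp
      have h1 : -b < p := by
        have := le_max_right (2 - c) ((-b + (2 - a)) / 2); linarith
      have h2 : p < 2 - a := max_lt (by linarith) (by linarith)
      have h3 : 2 - c ≤ p := le_max_left _ _
      have hC := GC ha hb hab h1 h2
      rw [hG p, GB hc hd hcd h3] at hC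
      exact lt_irrefl _ hC
    · exact h
    · exfalso
      set p := max (2 - a) ((-d + (2 - c)) / 2) with hp
      have h1 : -d < p := by
        have := le_max_right (2 - a) ((-d + (2 - c)) / 2)
        have hbd' : b = d := hbd
        linarith
      have h2 : p < 2 - c := max_lt (by linarith) (by linarith)
      have h3 : 2 - a ≤ p := le_max_left _ _
      have hC := GC hc hd hcd h1 h2
      rw [← hG p, GB ha hb hab h3] at hC
      exact lt_irrefl _ hC
  · -- (a,b) increasing, (c,d) decreasing : impossible
    exfalso
    set p := (-b + (2 - a)) / 2 with hp
    have h1 : -b < p := by simp only [hp]; linarith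
    have h2 : p < 2 - a := by simp only [hp]; linarith
    have hC := GC ha hb hab h1 h2
    rcases le_or_gt p (-c) with h | h
    · rw [hG p, GA' hc hd hcd h] at hC; exact lt_irrefl _ hC
    · rcases le_or_gt (2 - d) p with h' | h'
      · rw [hG p, GB' hc hd hcd h'] at hC; exact lt_irrefl _ hC
      · have hC' := GC' hc hd hcd h h'
        rw [← hG p] at hC'; linarith
  · -- (a,b) decreasing, (c,d) increasing : impossible
    exfalso
    set p := (-d + (2 - c)) / 2 with hp
    have h1 : -d < p := by simp only [hp]; linarith
    have h2 : p < 2 - c := by simp only [hp]; linarith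
    have hC := GC hc hd hcd h1 h2
    rcases le_or_gt p (-a) with h | h
    · rw [← hG p, GA' ha hb hab h] at hC; exact lt_irrefl _ hC
    · rcases le_or_gt (2 - b) p with h' | h'
      · rw [← hG p, GB' ha hb hab h'] at hC; exact lt_irrefl _ hC
      · have hC' := GC' ha hb hab h h'
        rw [hG p] at hC'; linarith
  · -- both decreasing
    have hac : a = c := by
      rcases lt_trichotomy a c with h | h | h
      · exfalso
        set p := min (-a) ((-c + (2 - d)) / 2) with hp
        have h1 : -c < p := by apply lt_min <;> linarith
        have h2 : p < 2 - d := by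
          have := min_le_right (-a) ((-c + (2 - d)) / 2); linarith
        have h3 : p ≤ -a := min_le_left _ _
        have hC := GC' hc hd hcd h1 h2
        rw [← hG p, GA' ha hb hab h3] at hC
        exact lt_irrefl _ hC
      · exact h
      · exfalso
        set p := min (-c) ((-a + (2 - b)) / 2) with hp
        have h1 : -a < p := by apply lt_min <;> linarith
        have h2 : p < 2 - b := by
          have := min_le_right (-c) ((-a + (2 - b)) / 2); linarith
        have h3 : p ≤ -c := min_le_left _ _
        have hC := GC' ha hb hab h1 h2
        rw [hG p, GA' hc hd hcd h3] at hC
        exact lt_irrefl _ hC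
    refine ⟨hac, ?_⟩
    rcases lt_trichotomy b d with h | h | h
    · exfalso
      set p := max (2 - d) ((-a + (2 - b)) / 2) with hp
      have h1 : -a < p := by
        have := le_max_right (2 - d) ((-a + (2 - b)) / 2); linarith
      have h2 : p < 2 - b := max_lt (by linarith) (by linarith)
      have h3 : 2 - d ≤ p := le_max_left _ _
      have hC := GC' ha hb hab h1 h2
      rw [hG p, GB' hc hd hcd h3] at hC
      exact lt_irrefl _ hC
    · exact h
    · exfalso
      set p := max (2 - b) ((-c + (2 - d)) / 2) with hp
      have h1 : -c < p := by
        have := le_max_right (2 - b) ((-c + (2 - d)) / 2); linarith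
      have h2 : p < 2 - d := max_lt (by linarith) (by linarith)
      have h3 : 2 - b ≤ p := le_max_left _ _
      have hC := GC' hc hd hcd h1 h2
      rw [← hG p, GB' ha hb hab h3] at hC
      exact lt_irrefl _ hC

end

end Statement7Aux

/-- for distinct `w₁, w₂ ∈ F` there is at most one pair `(i, j)` of
positive integers with `x₀ⁱx₁x₀⁻ⁱ w₁ = x₀ʲx₁x₀⁻ʲ w₂`. -/
theorem statement7 (w₁ w₂ : ThompsonF) (hw : w₁ ≠ w₂) (i j k l : ℤ)
    (hi : 0 < i) (hj : 0 < j) (hk : 0 < k) (hl : 0 < l)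
    (h₁ : x₀ ^ i * x₁ * x₀ ^ (-i) * w₁ = x₀ ^ j * x₁ * x₀ ^ (-j) * w₂)
    (h₂ : x₀ ^ k * x₁ * x₀ ^ (-k) * w₁ = x₀ ^ l * x₁ * x₀ ^ (-l) * w₂) :
    i = k ∧ j = l := by
  classical
  have hij : i ≠ j := by rintro rfl; exact hw (mul_left_cancel h₁)
  have hkl : k ≠ l := by rintro rfl; exact hw (mul_left_cancel h₂)
  open Statement7Aux in
  have key : (i : ℝ) = k ∧ (j : ℝ) = l := by
    have H1 := congrArg Statement7Aux.phi h₁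
    have H2 := congrArg Statement7Aux.phi h₂
    simp only [map_mul, map_zpow, Statement7Aux.phi_x0, Statement7Aux.phi_x1] at H1 H2
    set u1 := Statement7Aux.phi w₁ with hu1
    set u2 := Statement7Aux.phi w₂ with hu2
    have P1 : ∀ t : ℝ, Statement7Aux.bFun (u1 t + i) - i
        = Statement7Aux.bFun (u2 t + j) - j := by
      intro t
      have h := DFunLike.congr_fun H1 t
      simp only [Equiv.Perm.mul_apply, Statement7Aux.X0_zpow,
        Statement7Aux.X1_apply, Int.cast_neg, sub_neg_eq_add] at h
      exact h
    have P2 : ∀ t : ℝ, Statement7Aux.bFun (u1 t + k) - k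
        = Statement7Aux.bFun (u2 t + l) - l := by
      intro t
      have h := DFunLike.congr_fun H2 t
      simp only [Equiv.Perm.mul_apply, Statement7Aux.X0_zpow,
        Statement7Aux.X1_apply, Int.cast_neg, sub_neg_eq_add] at h
      exact h
    have Q : ∀ t : ℝ, Statement7Aux.G i j (u1 t) = Statement7Aux.G k l (u1 t) := by
      intro t
      have e1 : Statement7Aux.bFun (u2 t + j)
          = Statement7Aux.bFun (u1 t + i) - i + j := by linarith [P1 t]
      have e2 : Statement7Aux.bFun (u2 t + l)
          = Statement7Aux.bFun (u1 t + k) - k + l := by linarith [P2 t]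
      have f1 := congrArg Statement7Aux.biFun e1
      have f2 := congrArg Statement7Aux.biFun e2
      rw [Statement7Aux.bi_b] at f1 f2
      unfold Statement7Aux.G
      linarith [f1, f2]
    have hG : ∀ p : ℝ, Statement7Aux.G i j p = Statement7Aux.G k l p := by
      intro p
      have h := Q (u1⁻¹ p)
      rwa [show u1 (u1⁻¹ p) = p from u1.apply_symm_apply p] at h
    have h1i : (1 : ℝ) ≤ (i : ℝ) := by exact_mod_cast (by omega : (1:ℤ) ≤ i)
    have h1j : (1 : ℝ) ≤ (j : ℝ) := by exact_mod_cast (by omega : (1:ℤ) ≤ j)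
    have h1k : (1 : ℝ) ≤ (k : ℝ) := by exact_mod_cast (by omega : (1:ℤ) ≤ k)
    have h1l : (1 : ℝ) ≤ (l : ℝ) := by exact_mod_cast (by omega : (1:ℤ) ≤ l)
    have hij' : (i : ℝ) + 1 ≤ j ∨ (j : ℝ) + 1 ≤ i := by
      rcases hij.lt_or_gt with h | h
      · exact Or.inl (by exact_mod_cast (by omega : i + 1 ≤ j))
      · exact Or.inr (by exact_mod_cast (by omega : j + 1 ≤ i))
    have hkl' : (k : ℝ) + 1 ≤ l ∨ (l : ℝ) + 1 ≤ k := by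
      rcases hkl.lt_or_gt with h | h
      · exact Or.inl (by exact_mod_cast (by omega : k + 1 ≤ l))
      · exact Or.inr (by exact_mod_cast (by omega : l + 1 ≤ k))
    exact Statement7Aux.mainReal h1i h1j h1k h1l hij' hkl' hG
  exact ⟨by exact_mod_cast key.1, by exact_mod_cast key.2⟩
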